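/- Suppose J ⊂ ℝ is an interval containing the origin in its interior, and Λ : J − J → ℝ is Lebesgue measurable, where J − J is the Minkowski difference {x − y : x, y ∈ J}. The following are equivalent: (1) the nonzero-locus {t ∈ J − J : Λ(t) ≠ 0} is an interval I ⊆ J − J, Λ > 0 on I, and log Λ is concave on I; (2) the Toeplitz kernel T_Λ : J × J → ℝ, (x,y) ↦ Λ(x−y), is TN_2, i.e., Λ ≥ 0 on J − J and for all x₁ < x₂ in J and y₁ < y₂ in J, det ((Λ(x_j − y_k))_{j,k=1}^2) ≥ 0. -/

import Mathlib

open Set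
open scoped Pointwise

/-- J - J is ord-connected when J is. -/
lemma ordConnected_sub_self {J : Set ℝ} (hJ : J.OrdConnected) : (J - J).OrdConnected := by
  constructor
  rintro a ⟨p, hp, q, hq, rfl⟩ b ⟨u, hu, v, hv, rfl⟩ t ht
  obtain ⟨h1', h2'⟩ := ht
  have h1 : p - q ≤ t := h1'
  have h2 : t ≤ u - v := h2'
  -- t = p - q + s, 0 ≤ s ≤ (u-p)+(q-v)
  set s := t - (p - q) with hs
  have hs0 : 0 ≤ s := by simp [hs]; linarith
  have hsle : s ≤ (u - p) + (q - v) := by simp [hs]; linarith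
  set s₁ := min s (max (u - p) 0) with hs1
  set s₂ := s - s₁ with hs2
  have hs₁0 : 0 ≤ s₁ := le_min hs0 (le_max_right _ _)
  have hs₁le : s₁ ≤ max (u - p) 0 := min_le_right _ _
  have hs₂0 : 0 ≤ s₂ := by
    simp only [hs2, sub_nonneg, hs1]; exact min_le_left _ _
  have hs₂le : s₂ ≤ max (q - v) 0 := by
    rcases le_or_gt s (max (u - p) 0) with h | h
    · have : s₁ = s := min_eq_left h
      simp [hs2, this, le_max_right]
    · have : s₁ = max (u - p) 0 := min_eq_right h.le
      have : s₂ = s - max (u - p) 0 := by rw [hs2, this]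
      rw [this]
      have : s ≤ max (u - p) 0 + max (q - v) 0 := by
        calc s ≤ (u - p) + (q - v) := hsle
        _ ≤ max (u - p) 0 + max (q - v) 0 := add_le_add (le_max_left _ _) (le_max_left _ _)
      linarith
  refine ⟨p + s₁, ?_, q - s₂, ?_, by simp [hs2, hs]; ring⟩
  · rcases le_or_gt (u - p) 0 with h | h
    · have : s₁ = 0 := le_antisymm (hs₁le.trans (by simp [h])) hs₁0
      simpa [this] using hp
    · have : s₁ ≤ u - p := hs₁le.trans (by simp [h.le])
      exact hJ.out hp hu ⟨by linarith, by linarith⟩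
  · rcases le_or_gt (q - v) 0 with h | h
    · have : s₂ = 0 := le_antisymm (hs₂le.trans (by simp [h])) hs₂0
      simpa [this] using hq
    · have : s₂ ≤ q - v := hs₂le.trans (by simp [h.le])
      exact hJ.out hv hq ⟨by linarith, by linarith⟩

lemma neg_mem_sub_self {J : Set ℝ} {t : ℝ} (ht : t ∈ J - J) : -t ∈ J - J := by
  obtain ⟨p, hp, q, hq, rfl⟩ := ht
  exact ⟨q, hq, p, hp, by ring⟩

section DetLemmas

variable {J : Set ℝ} {Λ : ℝ → ℝ}

/-- Lemma A: for 0 ≤ c ≤ a ≤ d with d ∈ J - J, Λ c * Λ d ≤ Λ a * Λ (c+d-a). -/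
lemma lemA (hJ : J.OrdConnected)
    (hdet : ∀ x₁ ∈ J, ∀ x₂ ∈ J, ∀ y₁ ∈ J, ∀ y₂ ∈ J, x₁ < x₂ → y₁ < y₂ →
       0 ≤ Λ (x₁ - y₁) * Λ (x₂ - y₂) - Λ (x₁ - y₂) * Λ (x₂ - y₁))
    {c a d : ℝ} (hc0 : 0 ≤ c) (hca : c ≤ a) (had : a ≤ d) (hd : d ∈ J - J) :
    Λ c * Λ d ≤ Λ a * Λ (c + d - a) := by
  rcases eq_or_lt_of_le hca with rfl | hca
  · simp [show c + d - c = d by ring]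
  rcases eq_or_lt_of_le had with rfl | had
  · rw [show c + a - a = c by ring, mul_comm]
  obtain ⟨p, hp, q, hq, hpq'⟩ := hd
  have hpq : p - q = d := hpq'
  have hqp : q ≤ p := by linarith
  have h1 : q + a ∈ J := hJ.out hq hp ⟨by linarith, by linarith⟩
  have h2 : q + (a - c) ∈ J := hJ.out hq hp ⟨by linarith, by linarith⟩
  have := hdet (q + a) h1 p hp q hq (q + (a - c)) h2 (by linarith) (by linarith)
  have e1 : q + a - q = a := by ring
  have e2 : p - (q + (a - c)) = c + d - a := by rw [← hpq]; ring
  have e3 : q + a - (q + (a - c)) = c := by ring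
  rw [e1, e2, e3, hpq] at this
  linarith

/-- Lemma A': for c ≤ a ≤ d ≤ 0 with c ∈ J - J. -/
lemma lemA' (hJ : J.OrdConnected)
    (hdet : ∀ x₁ ∈ J, ∀ x₂ ∈ J, ∀ y₁ ∈ J, ∀ y₂ ∈ J, x₁ < x₂ → y₁ < y₂ →
       0 ≤ Λ (x₁ - y₁) * Λ (x₂ - y₂) - Λ (x₁ - y₂) * Λ (x₂ - y₁))
    {c a d : ℝ} (hca : c ≤ a) (had : a ≤ d) (hd0 : d ≤ 0) (hc : c ∈ J - J) :
    Λ c * Λ d ≤ Λ a * Λ (c + d - a) := by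
  rcases eq_or_lt_of_le hca with rfl | hca
  · simp [show c + d - c = d by ring]
  rcases eq_or_lt_of_le had with rfl | had
  · rw [show c + a - a = c by ring, mul_comm]
  obtain ⟨p, hp, q, hq, hpq'⟩ := hc
  have hpq : p - q = c := hpq'
  have hqp : p ≤ q := by linarith
  have h1 : p + (d - a) ∈ J := hJ.out hp hq ⟨by linarith, by linarith⟩
  have h2 : p - a ∈ J := hJ.out hp hq ⟨by linarith, by linarith⟩
  have := hdet p hp (p + (d - a)) h1 (p - a) h2 q hq (by linarith) (by linarith)
  have e1 : p - (p - a) = a := by ring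
  have e2 : p + (d - a) - q = c + d - a := by rw [← hpq]; ring
  have e4 : p + (d - a) - (p - a) = d := by ring
  rw [e1, e2, e4, hpq] at this
  linarith

/-- Lemma M: mixed sign. -/
lemma lemM (hJ : J.OrdConnected)
    (hdet : ∀ x₁ ∈ J, ∀ x₂ ∈ J, ∀ y₁ ∈ J, ∀ y₂ ∈ J, x₁ < x₂ → y₁ < y₂ →
       0 ≤ Λ (x₁ - y₁) * Λ (x₂ - y₂) - Λ (x₁ - y₂) * Λ (x₂ - y₁))
    {α β : ℝ} (hα : α ≤ 0) (hβ : 0 ≤ β) (hαm : α ∈ J - J) (hβm : β ∈ J - J) :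
    Λ α * Λ β ≤ Λ 0 * Λ (α + β) := by
  rcases eq_or_lt_of_le hα with rfl | hα
  · rw [zero_add, mul_comm]
  rcases eq_or_lt_of_le hβ with rfl | hβ
  · rw [add_zero, mul_comm]
  rcases le_or_gt (-α) β with h | h
  · obtain ⟨u, hu, w, hw, huw'⟩ := hβm
    have huw : u - w = β := huw'
    have hwu : w ≤ u := by linarith
    have h1 : w - α ∈ J := hJ.out hw hu ⟨by linarith, by linarith⟩
    have := hdet w hw u hu w hw (w - α) h1 (by linarith) (by linarith)
    have e1 : w - w = (0:ℝ) := by ring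
    have e2 : u - (w - α) = α + β := by rw [← huw]; ring
    have e3 : w - (w - α) = α := by ring
    rw [e1, e2, e3, huw] at this
    linarith
  · obtain ⟨p, hp, q, hq, hpq'⟩ := hαm
    have hpq : p - q = α := hpq'
    have hqp : p ≤ q := by linarith
    have h1 : p + β ∈ J := hJ.out hp hq ⟨by linarith, by linarith⟩
    have := hdet p hp (p + β) h1 p hp q hq (by linarith) (by linarith)
    have e1 : p - p = (0:ℝ) := by ring
    have e2 : p + β - q = α + β := by rw [← hpq]; ring
    have e4 : p + β - p = β := by ring
    rw [e1, e2, e4, hpq] at this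
    linarith

end DetLemmas

section Structure

variable {J : Set ℝ} {Λ : ℝ → ℝ}

lemma nonneg_on_sub (hpos : ∀ x ∈ J, ∀ y ∈ J, 0 ≤ Λ (x - y)) :
    ∀ t ∈ J - J, 0 ≤ Λ t := by
  rintro t ⟨x, hx, y, hy, rfl⟩
  exact hpos x hx y hy

lemma S_ordConnected (hJ : J.OrdConnected)
    (hpos : ∀ x ∈ J, ∀ y ∈ J, 0 ≤ Λ (x - y))
    (hdet : ∀ x₁ ∈ J, ∀ x₂ ∈ J, ∀ y₁ ∈ J, ∀ y₂ ∈ J, x₁ < x₂ → y₁ < y₂ →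
       0 ≤ Λ (x₁ - y₁) * Λ (x₂ - y₂) - Λ (x₁ - y₂) * Λ (x₂ - y₁)) :
    ({t ∈ J - J | Λ t ≠ 0}).OrdConnected := by
  have hnn := nonneg_on_sub hpos
  have hJJ := ordConnected_sub_self hJ
  constructor
  rintro c ⟨hcm, hcne⟩ d ⟨hdm, hdne⟩ z hz
  have hzm : z ∈ J - J := hJJ.out hcm hdm hz
  have hcp : 0 < Λ c := lt_of_le_of_ne (hnn c hcm) (Ne.symm hcne)
  have hdp : 0 < Λ d := lt_of_le_of_ne (hnn d hdm) (Ne.symm hdne)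
  refine ⟨hzm, fun hze => ?_⟩
  obtain ⟨hcz, hzd⟩ := hz
  rcases le_or_gt 0 c with hc0 | hc0
  · have := lemA hJ hdet hc0 hcz hzd hdm
    rw [hze, zero_mul] at this
    nlinarith
  rcases le_or_gt d 0 with hd0 | hd0
  · have := lemA' hJ hdet hcz hzd hd0 hcm
    rw [hze, zero_mul] at this
    nlinarith
  -- mixed: c < 0 < d
  have h0m : (0:ℝ) ∈ J - J := hJJ.out hcm hdm ⟨hc0.le, hd0.le⟩
  have hM := lemM hJ hdet hc0.le hd0.le hcm hdm
  have hcdm : c + d ∈ J - J := hJJ.out hcm hdm ⟨by linarith, by linarith⟩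
  have h0p : 0 < Λ 0 := by
    rcases (hnn 0 h0m).eq_or_lt with h | h
    · exfalso; nlinarith [hnn (c + d) hcdm]
    · exact h
  rcases le_or_gt 0 z with hz0 | hz0
  · have := lemA hJ hdet le_rfl hz0 hzd hdm
    rw [hze, zero_mul] at this
    nlinarith
  · have := lemA' hJ hdet hcz hz0.le le_rfl hcm
    rw [hze, zero_mul] at this
    nlinarith

/-- Midpoint multiplicative concavity on J - J. -/
lemma midpoint_mul (hJ : J.OrdConnected)
    (hpos : ∀ x ∈ J, ∀ y ∈ J, 0 ≤ Λ (x - y))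
    (hdet : ∀ x₁ ∈ J, ∀ x₂ ∈ J, ∀ y₁ ∈ J, ∀ y₂ ∈ J, x₁ < x₂ → y₁ < y₂ →
       0 ≤ Λ (x₁ - y₁) * Λ (x₂ - y₂) - Λ (x₁ - y₂) * Λ (x₂ - y₁))
    {x y : ℝ} (hx : x ∈ J - J) (hy : y ∈ J - J) (hxy : x ≤ y) :
    Λ x * Λ y ≤ Λ ((x + y) / 2) * Λ ((x + y) / 2) := by
  have hJJ := ordConnected_sub_self hJ
  set m := (x + y) / 2 with hm
  rcases le_or_gt 0 x with hx0 | hx0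
  · have := lemA (a := m) hJ hdet hx0 (by rw [hm]; linarith) (by rw [hm]; linarith) hy
    rwa [show x + y - m = m by rw [hm]; ring] at this
  rcases le_or_gt y 0 with hy0 | hy0
  · have := lemA' (a := m) hJ hdet (show x ≤ m by rw [hm]; linarith) (by rw [hm]; linarith) hy0 hx
    rwa [show x + y - m = m by rw [hm]; ring] at this
  have hsm : x + y ∈ J - J := hJJ.out hx hy ⟨by linarith, by linarith⟩
  have hM : Λ x * Λ y ≤ Λ 0 * Λ (x + y) := lemM hJ hdet hx0.le hy0.le hx hy
  rcases le_or_gt 0 m with hm0 | hm0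
  · have h2 : Λ 0 * Λ (x + y) ≤ Λ m * Λ (0 + (x + y) - m) :=
      lemA hJ hdet le_rfl hm0 (by rw [hm]; linarith) hsm
    rw [show 0 + (x + y) - m = m by rw [hm]; ring] at h2
    linarith
  · have h2 : Λ (x + y) * Λ 0 ≤ Λ m * Λ ((x + y) + 0 - m) :=
      lemA' hJ hdet (show x + y ≤ m by rw [hm]; linarith) hm0.le le_rfl hsm
    rw [show (x + y) + 0 - m = m by rw [hm]; ring] at h2
    linarith

end Structure
open Set

/-- Midpoint concavity + two-sided-derivable bound near w gives continuity at w. -/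
lemma continuousAt_of_midpointConcave {g : ℝ → ℝ} {w ρ M : ℝ}
    (hρpos : 0 < ρ)
    (hmid : ∀ x, |x - w| < ρ → ∀ y, |y - w| < ρ → g x + g y ≤ 2 * g ((x + y) / 2))
    (hM : ∀ x, |x - w| < ρ → -M ≤ g x) :
    ContinuousAt g w := by
  have hww : |w - w| < ρ := by simpa using hρpos
  -- upper bound by reflection through w
  have hup : ∀ x, |x - w| < ρ → g x ≤ 2 * g w + M := by
    intro x hx
    have hx' : |(2 * w - x) - w| < ρ := by
      rw [show (2 * w - x) - w = -(x - w) by ring, abs_neg]; exact hx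
    have h1 := hmid x hx (2 * w - x) hx'
    rw [show (x + (2 * w - x)) / 2 = w by ring] at h1
    have h2 := hM (2 * w - x) hx'
    linarith
  set C := g w + M with hC
  have hCpos : 0 ≤ C := by have := hM w hww; rw [hC]; linarith
  have habs : ∀ x, |x - w| < ρ → |g x - g w| ≤ C := by
    intro x hx
    rw [abs_le]
    have h1 := hM x hx
    have h2 := hup x hx
    have h3 := hM w hww
    constructor <;> (rw [hC]; linarith)
  have hiter : ∀ n : ℕ, ∀ t : ℝ, |t| < ρ / 2 ^ n → g w - g (w + t) ≤ C / 2 ^ n := by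
    intro n
    induction n with
    | zero =>
      intro t ht
      simp only [pow_zero, div_one] at ht ⊢
      have := habs (w + t) (by simpa using ht)
      rw [abs_le] at this; linarith [this.1]
    | succ n ih =>
      intro t ht
      have hpow : (0:ℝ) < 2 ^ n := by positivity
      have hpow1 : (0:ℝ) < 2 ^ (n+1) := by positivity
      have h2t : |2 * t| < ρ / 2 ^ n := by
        rw [abs_mul, abs_two]
        rw [lt_div_iff₀ hpow1] at ht
        rw [lt_div_iff₀ hpow]
        rw [pow_succ] at ht; linarith
      have hIH := ih (2 * t) h2t
      have hone : (1:ℝ) ≤ 2 ^ n := one_le_pow₀ (by norm_num)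
      have hone1 : (1:ℝ) ≤ 2 ^ (n+1) := one_le_pow₀ (by norm_num)
      have htρ : |t| < ρ := by
        have := ht.trans_le (div_le_self hρpos.le hone1)
        exact this
      have h2tρ : |2 * t| < ρ := h2t.trans_le (div_le_self hρpos.le hone)
      -- w + t is midpoint of w and w + 2t
      have hmm := hmid w hww (w + 2 * t) (by simpa using h2tρ)
      rw [show (w + (w + 2 * t)) / 2 = w + t by ring] at hmm
      -- g w + g (w + 2t) ≤ 2 g (w + t)
      -- ⇒ 2 (g w - g (w+t)) ≤ g w - g (w + 2t) ≤ C / 2^n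
      have : 2 * (g w - g (w + t)) ≤ C / 2 ^ n := by linarith
      rw [pow_succ]
      rw [show C / (2 ^ n * 2) = (C / 2 ^ n) / 2 by ring]
      linarith
  rw [Metric.continuousAt_iff]
  intro ε hε
  obtain ⟨n, hn⟩ : ∃ n : ℕ, C / 2 ^ n < ε := by
    obtain ⟨n, hn⟩ := pow_unbounded_of_one_lt (C / ε) (one_lt_two (α := ℝ))
    refine ⟨n, ?_⟩
    rw [div_lt_iff₀ (by positivity)]
    rw [div_lt_iff₀ hε] at hn
    linarith
  refine ⟨ρ / 2 ^ n, by positivity, fun {x} hx => ?_⟩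
  rw [Real.dist_eq] at hx ⊢
  set t := x - w with hts
  have hxw : x = w + t := by rw [hts]; ring
  have h1 : g w - g (w + t) ≤ C / 2 ^ n := hiter n t hx
  have h2 : g (w + t) - g w ≤ C / 2 ^ n := by
    have hmt : |(-t)| < ρ / 2 ^ n := by rwa [abs_neg]
    have h3 := hiter n (-t) hmt
    have hone : (1:ℝ) ≤ 2 ^ n := one_le_pow₀ (by norm_num)
    have htρ : |t| < ρ := hx.trans_le (div_le_self hρpos.le hone)
    have hmtρ : |(-t)| < ρ := by rwa [abs_neg]
    have hmm := hmid (w + t) (by simpa using htρ) (w + -t) (by simpa using hmtρ)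
    rw [show (w + t + (w + -t)) / 2 = w by ring] at hmm
    linarith
  rw [hxw, abs_lt]
  constructor <;> linarith

open MeasureTheory

/-- From measurability + midpoint concavity: local lower bound centered at any interior point. -/
lemma local_lower_bound {S : Set ℝ} (hSm : MeasurableSet S) {g : ℝ → ℝ}
    (hg : Measurable (S.restrict g))
    (hmid : ∀ x ∈ S, ∀ y ∈ S, g x + g y ≤ 2 * g ((x + y) / 2))
    {u v w : ℝ} (hIcc : Icc u v ⊆ S) (hw : w ∈ Ioo u v) :
    ∃ δ > 0, ∃ M, (∀ x, |x - w| < δ → |x - w| < δ → -M ≤ g x) ∧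
      (∀ x, |x - w| < δ → x ∈ Ioo u v) := by
  obtain ⟨hwu, hwv⟩ := hw
  set η := min (w - u) (v - w) / 2 with hη
  have hηpos : 0 < η := by
    rw [hη]; have := lt_min (show (0:ℝ) < w - u by linarith) (show (0:ℝ) < v - w by linarith)
    linarith [this]
  have hηu : η < w - u := by
    rw [hη]; have h1 : min (w - u) (v - w) ≤ w - u := min_le_left _ _
    have h2 : 0 < min (w - u) (v - w) := lt_min (by linarith) (by linarith)
    linarith
  have hηv : η < v - w := by
    rw [hη]; have h1 : min (w - u) (v - w) ≤ v - w := min_le_right _ _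
    have h2 : 0 < min (w - u) (v - w) := lt_min (by linarith) (by linarith)
    linarith
  set I : Set ℝ := Icc (w - η) (w + η) with hI
  have hIsub : I ⊆ Ioo u v := fun x hx => ⟨by rw [hI] at hx; linarith [hx.1], by rw [hI] at hx; linarith [hx.2]⟩
  have hIS : I ⊆ S := fun x hx => hIcc ⟨by linarith [(hIsub hx).1.le], by linarith [(hIsub hx).2.le]⟩
  -- the sets Eₙ
  set E : ℕ → Set ℝ := fun n => Subtype.val '' {x : S | x.1 ∈ I ∧ -(n:ℝ) ≤ g x.1} with hE
  have hEmeas : ∀ n, MeasurableSet (E n) := by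
    intro n
    rw [hE]
    apply (MeasurableEmbedding.subtype_coe hSm).measurableSet_image.mpr
    have heq : {x : ↥S | x.1 ∈ I ∧ -(n:ℝ) ≤ g x.1}
        = (Subtype.val ⁻¹' I) ∩ ((S.restrict g) ⁻¹' Ici (-(n:ℝ))) := by
      ext x
      simp only [mem_setOf_eq, mem_inter_iff, mem_preimage, mem_Ici, restrict_apply]
      exact Iff.rfl
    rw [heq]
    exact (measurable_subtype_coe measurableSet_Icc).inter (hg measurableSet_Ici)
  have hEI : ∀ n, E n ⊆ I := by rintro n x ⟨y, ⟨hy1, _⟩, rfl⟩; exact hy1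
  have hEmono : Monotone E := by
    intro m n hmn x
    rintro ⟨y, ⟨hy1, hy2⟩, rfl⟩
    have : -(n:ℝ) ≤ -(m:ℝ) := by simp; exact_mod_cast hmn
    exact ⟨y, ⟨hy1, le_trans this hy2⟩, rfl⟩
  have hEunion : ⋃ n, E n = I := by
    apply Subset.antisymm
    · exact iUnion_subset hEI
    · intro x hx
      obtain ⟨n, hn⟩ := exists_nat_ge (-(g x))
      refine mem_iUnion.mpr ⟨n, ⟨⟨x, hIS hx⟩, ⟨hx, by linarith⟩, rfl⟩⟩
  have hμI : volume I = ENNReal.ofReal (2 * η) := by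
    rw [hI, Real.volume_Icc, show w + η - (w - η) = 2 * η by ring]
  -- find n with volume (E n) > 7/8 volume I
  have hsup : volume I = ⨆ n, volume (E n) := by
    rw [← hEunion]
    exact Directed.measure_iUnion (directed_of_isDirected_le (fun i j h => hEmono h))
  obtain ⟨n, hn⟩ : ∃ n, ENNReal.ofReal (7 * η / 4) < volume (E n) := by
    have h1 : ENNReal.ofReal (7 * η / 4) < volume I := by
      rw [hμI]; exact ENNReal.ofReal_lt_ofReal_iff (by linarith) |>.mpr (by linarith)
    rw [hsup] at h1
    exact lt_iSup_iff.mp h1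
  refine ⟨η / 8, by linarith, n, ?_, ?_⟩
  swap
  · intro x hx
    rw [abs_lt] at hx
    exact hIsub (by rw [hI, mem_Icc]; constructor <;> linarith [hx.1, hx.2])
  intro c hc _
  rw [abs_lt] at hc
  set t := c - w with ht
  -- reflection σ x = 2c - x
  set B : Set ℝ := I ∩ ((fun x => 2 * c - x) ⁻¹' E n) with hB
  have hσmeas : Measurable (fun x : ℝ => 2 * c - x) := measurable_id.const_sub (2 * c)
  have hBmeas : MeasurableSet B := measurableSet_Icc.inter (hσmeas (hEmeas n))
  have hAB : (E n ∩ B).Nonempty := by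
    by_contra hcon
    rw [not_nonempty_iff_eq_empty] at hcon
    have hdisj : Disjoint (E n) B := disjoint_iff_inter_eq_empty.mpr hcon
    have hsub : E n ∪ B ⊆ I := union_subset (hEI n) inter_subset_left
    have h1 : volume (E n) + volume B = volume (E n ∪ B) :=
      (measure_union hdisj hBmeas).symm
    have h2 : volume (E n ∪ B) ≤ volume I := measure_mono hsub
    -- volume of preimage
    have hpre : volume ((fun x : ℝ => 2 * c - x) ⁻¹' E n) = volume (E n) := by
      have : (fun x : ℝ => 2 * c - x) ⁻¹' E n = (fun x : ℝ => -x) ⁻¹' ((fun y : ℝ => 2 * c + y) ⁻¹' E n) := by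
        ext x; simp [sub_eq_add_neg]
      rw [this, Measure.measure_preimage_neg, measure_preimage_add]
    -- preimage is contained in B ∪ (I'' \ I) where I'' = Icc (w + 2t - η) (w + 2t + η)
    have hpresub : (fun x : ℝ => 2 * c - x) ⁻¹' E n ⊆
        B ∪ (Icc (w + 2*t - η) (w - η) ∪ Icc (w + η) (w + 2*t + η)) := by
      intro x hx
      have hxI'' : 2 * c - x ∈ I := hEI n hx
      rw [hI, mem_Icc] at hxI''
      rcases le_or_gt x (w - η) with h | h
      · right; left
        rw [mem_Icc]
        constructor <;> linarith [hxI''.1, hxI''.2]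
      rcases lt_or_ge x (w + η) with h' | h'
      · left; exact ⟨⟨h.le, h'.le⟩, hx⟩
      · right; right
        rw [mem_Icc]
        constructor <;> linarith [hxI''.1, hxI''.2]
    have hsmall : volume (Icc (w + 2*t - η) (w - η) ∪ Icc (w + η) (w + 2*t + η))
        ≤ ENNReal.ofReal (η / 4) + ENNReal.ofReal (η / 4) := by
      refine (measure_union_le _ _).trans ?_
      rw [Real.volume_Icc, Real.volume_Icc]
      have e1 : ENNReal.ofReal (w - η - (w + 2*t - η)) ≤ ENNReal.ofReal (η / 4) :=
        ENNReal.ofReal_le_ofReal (by linarith [hc.1, hc.2])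
      have e2 : ENNReal.ofReal (w + 2*t + η - (w + η)) ≤ ENNReal.ofReal (η / 4) :=
        ENNReal.ofReal_le_ofReal (by linarith [hc.1, hc.2])
      exact add_le_add e1 e2
    have hchain : volume (E n) ≤ volume B + ENNReal.ofReal (η / 4 + η / 4) := by
      calc volume (E n) = volume ((fun x : ℝ => 2 * c - x) ⁻¹' E n) := hpre.symm
      _ ≤ volume B + volume (Icc (w + 2*t - η) (w - η) ∪ Icc (w + η) (w + 2*t + η)) := by
          refine (measure_mono hpresub).trans (measure_union_le _ _)
      _ ≤ volume B + (ENNReal.ofReal (η / 4) + ENNReal.ofReal (η / 4)) := by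
          exact add_le_add le_rfl hsmall
      _ = volume B + ENNReal.ofReal (η / 4 + η / 4) := by
          rw [ENNReal.ofReal_add (by linarith) (by linarith)]
    -- combine
    have hfin : volume (E n) + volume (E n) ≤ volume I + ENNReal.ofReal (η / 4 + η / 4) := by
      calc volume (E n) + volume (E n)
          ≤ volume (E n) + (volume B + ENNReal.ofReal (η / 4 + η / 4)) := add_le_add le_rfl hchain
      _ = (volume (E n) + volume B) + ENNReal.ofReal (η / 4 + η / 4) := by ring
      _ ≤ volume I + ENNReal.ofReal (η / 4 + η / 4) := add_le_add (h1 ▸ h2) le_rfl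
    have hlhs : ENNReal.ofReal (7 * η / 4 + 7 * η / 4) < volume (E n) + volume (E n) := by
      rw [ENNReal.ofReal_add (by linarith) (by linarith)]
      exact ENNReal.add_lt_add hn hn
    have hrhs : volume I + ENNReal.ofReal (η / 4 + η / 4) = ENNReal.ofReal (5 * η / 2) := by
      rw [hμI, ← ENNReal.ofReal_add (by linarith) (by linarith)]
      congr 1
      ring
    rw [hrhs] at hfin
    have : ENNReal.ofReal (7 * η / 4 + 7 * η / 4) < ENNReal.ofReal (5 * η / 2) :=
      lt_of_lt_of_le hlhs hfin
    rw [ENNReal.ofReal_lt_ofReal_iff (by linarith)] at this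
    linarith
  obtain ⟨x, hxE, hxB⟩ := hAB
  obtain ⟨hxI, hxσ⟩ := hxB
  have hσmem : 2 * c - x ∈ E n := hxσ
  -- x ∈ E n, 2c - x ∈ E n
  obtain ⟨y, ⟨hy1, hy2⟩, hyx⟩ := hxE
  obtain ⟨z, ⟨hz1, hz2⟩, hzx⟩ := hσmem
  have hgx : -(n:ℝ) ≤ g x := by rw [← hyx]; exact hy2
  have hgσx : -(n:ℝ) ≤ g (2 * c - x) := by rw [← hzx]; exact hz2
  have hxS : x ∈ S := hIS (hyx ▸ hy1)
  have hσxS : (2 * c - x) ∈ S := hIS (hzx ▸ hz1)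
  have := hmid x hxS (2 * c - x) hσxS
  rw [show (x + (2 * c - x)) / 2 = c by ring] at this
  linarith

/-- Dyadic concavity from midpoint concavity. -/
lemma dyadic_concave {g : ℝ → ℝ} {a b : ℝ} (hab : a < b)
    (hmid : ∀ x ∈ Icc a b, ∀ y ∈ Icc a b, g x + g y ≤ 2 * g ((x + y) / 2)) :
    ∀ n k : ℕ, k ≤ 2 ^ n →
      (1 - (k : ℝ) / 2 ^ n) * g a + ((k : ℝ) / 2 ^ n) * g b
        ≤ g (a + ((k : ℝ) / 2 ^ n) * (b - a)) := by
  intro n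
  induction n with
  | zero =>
    intro k hk
    interval_cases k
    · norm_num
    · norm_num
  | succ n ih =>
    intro k hk
    have hpow : (0:ℝ) < 2 ^ n := by positivity
    have hpow1 : (0:ℝ) < 2 ^ (n+1) := by positivity
    rcases Nat.even_or_odd k with ⟨j, hj⟩ | ⟨j, hj⟩
    · -- k = 2j
      have hj2 : j ≤ 2 ^ n := by omega
      have hcast : (k : ℝ) / 2 ^ (n+1) = (j : ℝ) / 2 ^ n := by
        subst hj; push_cast; rw [pow_succ]; field_simp; ring
      rw [hcast]
      exact ih j hj2
    · -- k = 2j + 1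
      have hj1 : j ≤ 2 ^ n := by omega
      have hj2 : j + 1 ≤ 2 ^ n := by omega
      set s : ℝ := (j : ℝ) / 2 ^ n with hs
      set tt : ℝ := ((j : ℝ) + 1) / 2 ^ n with htt
      have hs0 : 0 ≤ s := by positivity
      have hs1 : s ≤ 1 := by
        rw [hs, div_le_one hpow]; exact_mod_cast hj1
      have ht0 : 0 ≤ tt := by positivity
      have ht1 : tt ≤ 1 := by
        rw [htt, div_le_one hpow]; push_cast; exact_mod_cast hj2
      have hxm : a + s * (b - a) ∈ Icc a b := by
        constructor <;> nlinarith
      have hym : a + tt * (b - a) ∈ Icc a b := by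
        constructor <;> nlinarith
      have hmain := hmid _ hxm _ hym
      have hIH1 := ih j hj1
      have hIH2 : (1 - tt) * g a + tt * g b ≤ g (a + tt * (b - a)) := by
        have := ih (j + 1) hj2
        rw [htt]; push_cast
        convert this using 4 <;> push_cast <;> ring
      have hr : (k : ℝ) / 2 ^ (n+1) = (s + tt) / 2 := by
        subst hj; rw [hs, htt]; push_cast; rw [pow_succ]; field_simp; ring
      have hmidpt : a + ((k : ℝ) / 2 ^ (n+1)) * (b - a)
          = ((a + s * (b - a)) + (a + tt * (b - a))) / 2 := by
        rw [hr]; ring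
      have hlin : (1 - (k : ℝ) / 2 ^ (n+1)) * g a + ((k : ℝ) / 2 ^ (n+1)) * g b
          = (((1 - s) * g a + s * g b) + ((1 - tt) * g a + tt * g b)) / 2 := by
        rw [hr]; ring
      rw [hmidpt, hlin]
      linarith

/-- Main assembler: midpoint concave + measurable restriction implies concave. -/
lemma concaveOn_of_midpointConcave {S : Set ℝ} (hS : S.OrdConnected) {g : ℝ → ℝ}
    (hg : Measurable (S.restrict g))
    (hmid : ∀ x ∈ S, ∀ y ∈ S, g x + g y ≤ 2 * g ((x + y) / 2)) :
    ConcaveOn ℝ S g := by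
  have hSm : MeasurableSet S := hS.measurableSet
  have key : ∀ a ∈ S, ∀ b ∈ S, a < b → ∀ q : ℝ, 0 ≤ q → q ≤ 1 →
      (1 - q) * g a + q * g b ≤ g (a + q * (b - a)) := by
    intro a ha b hb hab q hq0 hq1
    have hIcc : Icc a b ⊆ S := hS.out ha hb
    have hmid' : ∀ x ∈ Icc a b, ∀ y ∈ Icc a b, g x + g y ≤ 2 * g ((x + y) / 2) :=
      fun x hx y hy => hmid x (hIcc hx) y (hIcc hy)
    rcases eq_or_lt_of_le hq0 with rfl | hq0
    · simp
    rcases eq_or_lt_of_le hq1 with rfl | hq1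
    · simp
    -- interior point
    set z := a + q * (b - a) with hz
    have hzI : z ∈ Ioo a b := by
      constructor <;> (rw [hz]; nlinarith)
    -- local lower bound around z
    obtain ⟨δ, hδpos, M, hM, hball⟩ :=
      local_lower_bound hSm hg hmid (u := a) (v := b) hIcc hzI
    -- continuity at z
    have hcont : ContinuousAt g z := by
      apply continuousAt_of_midpointConcave (ρ := δ) (M := M) hδpos
      · intro x hx y hy
        exact hmid' x (Ioo_subset_Icc_self (hball x hx)) y (Ioo_subset_Icc_self (hball y hy))
      · intro x hx; exact hM x hx hx
    -- dyadic approximation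
    have hdy := dyadic_concave hab hmid'
    set F : ℝ → ℝ := fun q => g (a + q * (b - a)) with hF
    have hcontF : ContinuousAt F q := by
      apply ContinuousAt.comp
      · rw [show a + q * (b - a) = z from rfl] at *
        exact hcont
      · fun_prop
    -- dyadic sequence tending to q
    set d : ℕ → ℝ := fun n => (⌊q * 2 ^ n⌋₊ : ℝ) / 2 ^ n with hd
    have hdk : ∀ n, (⌊q * 2 ^ n⌋₊ : ℕ) ≤ 2 ^ n := by
      intro n
      have : q * 2 ^ n ≤ 2 ^ n := by nlinarith [pow_pos (show (0:ℝ) < 2 by norm_num) n]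
      calc ⌊q * 2 ^ n⌋₊ ≤ ⌊(2:ℝ) ^ n⌋₊ := Nat.floor_le_floor this
      _ = 2 ^ n := by
          rw [show ((2:ℝ) ^ n) = ((2 ^ n : ℕ) : ℝ) by push_cast; ring, Nat.floor_natCast]
    have hdle : ∀ n, d n ≤ q := by
      intro n
      rw [hd]
      have hpow : (0:ℝ) < 2 ^ n := by positivity
      rw [div_le_iff₀ hpow]
      exact Nat.floor_le (by positivity)
    have hdge : ∀ n, q - 1 / 2 ^ n ≤ d n := by
      intro n
      rw [hd]
      have hpow : (0:ℝ) < 2 ^ n := by positivity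
      rw [sub_le_iff_le_add, ← add_div, le_div_iff₀ hpow]
      have := Nat.lt_floor_add_one (q * 2 ^ n)
      linarith
    have hdtend : Filter.Tendsto d Filter.atTop (nhds q) := by
      have h1 : Filter.Tendsto (fun n : ℕ => q - 1 / 2 ^ n) Filter.atTop (nhds (q - 0)) := by
        apply Filter.Tendsto.sub tendsto_const_nhds
        have := tendsto_pow_atTop_nhds_zero_of_lt_one
          (show (0:ℝ) ≤ 1/2 by norm_num) (show (1:ℝ)/2 < 1 by norm_num)
        simpa [div_pow, one_div] using this
      rw [sub_zero] at h1
      exact tendsto_of_tendsto_of_tendsto_of_le_of_le h1 tendsto_const_nhds hdge hdle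
    have hineq : ∀ n, (1 - d n) * g a + (d n) * g b ≤ F (d n) := by
      intro n
      exact hdy n _ (hdk n)
    -- take limits
    have hlhs : Filter.Tendsto (fun n => (1 - d n) * g a + (d n) * g b)
        Filter.atTop (nhds ((1 - q) * g a + q * g b)) := by
      apply Filter.Tendsto.add
      · exact (Filter.Tendsto.sub tendsto_const_nhds hdtend).mul tendsto_const_nhds
      · exact hdtend.mul tendsto_const_nhds
    have hrhs : Filter.Tendsto (fun n => F (d n)) Filter.atTop (nhds (F q)) :=
      hcontF.tendsto.comp hdtend
    exact le_of_tendsto_of_tendsto' hlhs hrhs hineq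
  constructor
  · exact hS.convex
  · intro x hx y hy p q hp hq hpq
    simp only [smul_eq_mul]
    rcases lt_trichotomy x y with hxy | rfl | hxy
    · have hq1 : q ≤ 1 := by linarith
      have := key x hx y hy hxy q hq hq1
      rw [show x + q * (y - x) = p * x + q * y by rw [show p = 1 - q by linarith]; ring,
        show (1 - q) = p by linarith] at this
      exact this
    · rw [show p * x + q * x = x by rw [← add_mul, hpq, one_mul]]
      rw [show p * g x + q * g x = g x by rw [← add_mul, hpq, one_mul]]
    · have hp1 : p ≤ 1 := by linarith
      have := key y hy x hx hxy p hp hp1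
      rw [show y + p * (x - y) = p * x + q * y by rw [show q = 1 - p by linarith]; ring,
        show (1 - p) = q by linarith] at this
      linarith

open Set
open scoped Pointwise

theorem stmt18 (J : Set ℝ) (hJ : J.OrdConnected) (h0 : (0 : ℝ) ∈ interior J)
    (Λ : ℝ → ℝ) (hmeas : Measurable ((J - J).restrict Λ)) :
    (({t ∈ J - J | Λ t ≠ 0}).OrdConnected ∧
     (∀ t ∈ J - J, Λ t ≠ 0 → 0 < Λ t) ∧
     ConcaveOn ℝ {t ∈ J - J | Λ t ≠ 0} (fun t => Real.log (Λ t))) ↔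
    ((∀ x ∈ J, ∀ y ∈ J, 0 ≤ Λ (x - y)) ∧
     (∀ x₁ ∈ J, ∀ x₂ ∈ J, ∀ y₁ ∈ J, ∀ y₂ ∈ J, x₁ < x₂ → y₁ < y₂ →
       0 ≤ Λ (x₁ - y₁) * Λ (x₂ - y₂) - Λ (x₁ - y₂) * Λ (x₂ - y₁))) := by
  set S := {t ∈ J - J | Λ t ≠ 0} with hSdef
  constructor
  · rintro ⟨hconn, hposS, hconc⟩
    have hnn : ∀ t ∈ J - J, 0 ≤ Λ t := by
      intro t ht
      rcases eq_or_ne (Λ t) 0 with h | h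
      · exact h.symm.le
      · exact (hposS t ht h).le
    refine ⟨fun x hx y hy => hnn _ ⟨x, hx, y, hy, rfl⟩, ?_⟩
    intro x₁ hx₁ x₂ hx₂ y₁ hy₁ y₂ hy₂ hx hy
    set c := x₁ - y₂ with hc
    set d := x₂ - y₁ with hd
    set a := x₁ - y₁ with ha
    set b := x₂ - y₂ with hb
    have hcm : c ∈ J - J := ⟨x₁, hx₁, y₂, hy₂, rfl⟩
    have hdm : d ∈ J - J := ⟨x₂, hx₂, y₁, hy₁, rfl⟩
    have ham : a ∈ J - J := ⟨x₁, hx₁, y₁, hy₁, rfl⟩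
    have hbm : b ∈ J - J := ⟨x₂, hx₂, y₂, hy₂, rfl⟩
    rcases eq_or_ne (Λ c) 0 with hc0 | hc0
    · rw [hc0, zero_mul]
      have := mul_nonneg (hnn a ham) (hnn b hbm)
      linarith
    rcases eq_or_ne (Λ d) 0 with hd0 | hd0
    · rw [hd0, mul_zero]
      have := mul_nonneg (hnn a ham) (hnn b hbm)
      linarith
    have hcd : c < d := by rw [hc, hd]; linarith
    have hca : c ≤ a := by rw [hc, ha]; linarith
    have had : a ≤ d := by rw [ha, hd]; linarith
    have hcb : c ≤ b := by rw [hc, hb]; linarith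
    have hbd : b ≤ d := by rw [hb, hd]; linarith
    have hcS : c ∈ S := ⟨hcm, hc0⟩
    have hdS : d ∈ S := ⟨hdm, hd0⟩
    have haS : a ∈ S := hconn.out hcS hdS ⟨hca, had⟩
    have hbS : b ∈ S := hconn.out hcS hdS ⟨hcb, hbd⟩
    have hcp : 0 < Λ c := hposS c hcm hc0
    have hdp : 0 < Λ d := hposS d hdm hd0
    have hap : 0 < Λ a := hposS a haS.1 haS.2
    have hbp : 0 < Λ b := hposS b hbS.1 hbS.2
    set θ : ℝ := (d - a) / (d - c) with hθ
    have hdc : 0 < d - c := by linarith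
    have hθ0 : 0 ≤ θ := by
      rw [hθ]; exact div_nonneg (by linarith) (by linarith)
    have hθ1 : 0 ≤ 1 - θ := by
      rw [hθ, sub_nonneg, div_le_one hdc]; linarith
    have hsum : θ + (1 - θ) = 1 := by ring
    have hcomb1 : θ • c + (1 - θ) • d = a := by
      simp only [smul_eq_mul]
      rw [hθ]; field_simp; ring
    have e1 := hconc.2 hcS hdS hθ0 hθ1 hsum
    rw [hcomb1] at e1
    have hb' : b = c + d - a := by rw [ha, hb, hc, hd]; ring
    have hcomb2 : (1 - θ) • c + θ • d = b := by
      simp only [smul_eq_mul]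
      rw [hb', hθ]; field_simp; ring
    have e2 := hconc.2 hcS hdS hθ1 hθ0 (by ring)
    rw [hcomb2] at e2
    simp only [smul_eq_mul] at e1 e2
    -- sum of logs
    have hsumlog : Real.log (Λ c) + Real.log (Λ d) ≤ Real.log (Λ a) + Real.log (Λ b) := by
      linarith
    have hfin : Λ c * Λ d ≤ Λ a * Λ b := by
      have h1 : Real.log (Λ c * Λ d) ≤ Real.log (Λ a * Λ b) := by
        rw [Real.log_mul hcp.ne' hdp.ne', Real.log_mul hap.ne' hbp.ne']
        exact hsumlog
      exact (Real.log_le_log_iff (mul_pos hcp hdp) (mul_pos hap hbp)).mp h1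
    linarith
  · rintro ⟨hpos, hdet⟩
    have hSconn : S.OrdConnected := S_ordConnected hJ hpos hdet
    have hnn := nonneg_on_sub (Λ := Λ) hpos
    refine ⟨hSconn, fun t ht hne => lt_of_le_of_ne (hnn t ht) (Ne.symm hne), ?_⟩
    -- midpoint concavity of log ∘ Λ on S
    have hmidS : ∀ x ∈ S, ∀ y ∈ S,
        Real.log (Λ x) + Real.log (Λ y) ≤ 2 * Real.log (Λ ((x + y) / 2)) := by
      have main : ∀ x ∈ S, ∀ y ∈ S, x ≤ y →
          Real.log (Λ x) + Real.log (Λ y) ≤ 2 * Real.log (Λ ((x + y) / 2)) := by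
        intro x hx y hy hxy
        have hxp : 0 < Λ x := lt_of_le_of_ne (hnn x hx.1) (Ne.symm hx.2)
        have hyp : 0 < Λ y := lt_of_le_of_ne (hnn y hy.1) (Ne.symm hy.2)
        have hmS : (x + y) / 2 ∈ S := hSconn.out hx hy ⟨by linarith, by linarith⟩
        have hmp : 0 < Λ ((x + y) / 2) := lt_of_le_of_ne (hnn _ hmS.1) (Ne.symm hmS.2)
        have := midpoint_mul hJ hpos hdet hx.1 hy.1 hxy
        have hlog : Real.log (Λ x * Λ y)
            ≤ Real.log (Λ ((x + y) / 2) * Λ ((x + y) / 2)) :=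
          Real.log_le_log (mul_pos hxp hyp) this
        rw [Real.log_mul hxp.ne' hyp.ne', Real.log_mul hmp.ne' hmp.ne'] at hlog
        linarith
      intro x hx y hy
      rcases le_total x y with h | h
      · exact main x hx y hy h
      · have := main y hy x hx h
        rw [show (y + x) / 2 = (x + y) / 2 by ring] at this
        linarith
    -- measurability of restriction
    have hSsub : S ⊆ J - J := sep_subset _ _
    have hmeasS : Measurable (S.restrict (fun t => Real.log (Λ t))) := by
      have h1 : S.restrict Λ = ((J - J).restrict Λ) ∘ (inclusion hSsub) := rfl
      have h2 : Measurable (S.restrict Λ) := by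
        rw [h1]; exact hmeas.comp (measurable_inclusion hSsub)
      exact Real.measurable_log.comp h2
    exact concaveOn_of_midpointConcave hSconn hmeasS hmidS
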